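/- The function f defined by f(ε) = 16π(1/ε + (1/(2ε²))·log((1−ε)/(1+ε)) + 4ε/(3(1−ε²))) is strictly increasing on the interval (0,1), takes only positive values there, and its range is exactly (0,∞); that is, f(ε) → 0 as ε → 0⁺, f(ε) → ∞ as ε → 1⁻, and f is a strictly increasing bijection from (0,1) onto (0,∞). -/

import Mathlib

noncomputable section

open Filter

/-- The function relating the net force `|b|` of the Landau solution to its parameter `ε`:
`f(ε) = 16π (1/ε + (1/(2ε²)) log((1−ε)/(1+ε)) + 4ε/(3(1−ε²)))`. -/
def forceF (ε : ℝ) : ℝ :=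
  16 * Real.pi * (1 / ε + (1 / (2 * ε ^ 2)) * Real.log ((1 - ε) / (1 + ε))
    + 4 * ε / (3 * (1 - ε ^ 2)))

lemma hasDerivAt_logRatio {x:ℝ} (h1 : -1 < x) (h2 : x < 1) :
    HasDerivAt (fun t => Real.log ((1+t)/(1-t))) (2/(1-x^2)) x := by
  have h1' : (0:ℝ) < 1 + x := by linarith
  have h2' : (0:ℝ) < 1 - x := by linarith
  have hd : HasDerivAt (fun t : ℝ => (1+t)/(1-t)) (2/(1-x)^2) x := by
    have ha : HasDerivAt (fun t : ℝ => 1+t) 1 x := (hasDerivAt_id x).const_add 1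
    have hb : HasDerivAt (fun t : ℝ => 1-t) (-1) x := (hasDerivAt_id x).const_sub 1
    have := ha.div hb (by linarith)
    refine this.congr_deriv ?_
    ring_nf
  have hne : (1:ℝ) - x^2 ≠ 0 := by nlinarith
  have := hd.log (by positivity)
  convert this using 1
  field_simp
  ring

lemma hasDerivAt_logRatio' {x:ℝ} (h1 : -1 < x) (h2 : x < 1) :
    HasDerivAt (fun t => Real.log ((1-t)/(1+t))) (-2/(1-x^2)) x := by
  have h1' : (0:ℝ) < 1 + x := by linarith
  have h2' : (0:ℝ) < 1 - x := by linarith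
  have hd : HasDerivAt (fun t : ℝ => (1-t)/(1+t)) (-2/(1+x)^2) x := by
    have ha : HasDerivAt (fun t : ℝ => 1-t) (-1) x := (hasDerivAt_id x).const_sub 1
    have hb : HasDerivAt (fun t : ℝ => 1+t) 1 x := (hasDerivAt_id x).const_add 1
    have := ha.div hb (by linarith)
    refine this.congr_deriv ?_
    ring_nf
  have hne : (1:ℝ) - x^2 ≠ 0 := by nlinarith
  have := hd.log (by positivity)
  convert this using 1
  field_simp
  ring

lemma log_lb {x:ℝ} (hx : x ∈ Set.Ioo (0:ℝ) 1) :
    2*x + 2*x^3/3 ≤ Real.log ((1+x)/(1-x)) := by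
  set φ : ℝ → ℝ := fun t => Real.log ((1+t)/(1-t)) - (2*t + 2*t^3/3) with hφdef
  have hd : ∀ t ∈ Set.Ico (0:ℝ) 1, HasDerivAt φ (2/(1-t^2) - (2 + 2*t^2)) t := by
    intro t ht
    have h1 : -1 < t := by linarith [ht.1]
    have hpoly : HasDerivAt (fun t:ℝ => 2*t + 2*t^3/3) (2 + 2*t^2) t := by
      have := ((hasDerivAt_id t).const_mul 2).add (((hasDerivAt_pow 3 t).const_mul 2).div_const 3)
      refine this.congr_deriv ?_
      push_cast
      ring
    exact (hasDerivAt_logRatio h1 ht.2).sub hpoly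
  have hmono : StrictMonoOn φ (Set.Ico (0:ℝ) 1) := by
    apply strictMonoOn_of_deriv_pos (convex_Ico 0 1)
    · exact fun t ht => ((hd t ht).continuousAt).continuousWithinAt
    · rw [interior_Ico]
      intro t ht
      rw [(hd t (Set.mem_Ico.2 ⟨le_of_lt ht.1, ht.2⟩)).deriv]
      have h0 : (0:ℝ) < 1 - t^2 := by nlinarith [ht.1, ht.2]
      have : 2/(1-t^2) - (2 + 2*t^2) = 2*t^4/(1-t^2) := by field_simp; ring
      rw [this]
      exact div_pos (by nlinarith [pow_pos ht.1 4]) h0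
  have := hmono (Set.mem_Ico.2 ⟨le_refl 0, by norm_num⟩) (Set.mem_Ico.2 ⟨le_of_lt hx.1, hx.2⟩) hx.1
  simp only [hφdef] at this
  norm_num at this
  linarith

lemma log_ub {x:ℝ} (hx : x ∈ Set.Ioo (0:ℝ) 1) :
    Real.log ((1+x)/(1-x)) ≤ 2*x + 2*x^3/3 + 2/5*x^5/(1-x^2) := by
  set ψ : ℝ → ℝ := fun t => 2*t + 2*t^3/3 + 2/5*t^5/(1-t^2) - Real.log ((1+t)/(1-t)) with hψdef
  have hd : ∀ t ∈ Set.Ico (0:ℝ) 1, HasDerivAt ψ (4*t^6/(5*(1-t^2)^2)) t := by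
    intro t ht
    have h1 : -1 < t := by linarith [ht.1]
    have h0 : (0:ℝ) < 1 - t^2 := by nlinarith [ht.1, ht.2]
    have hpoly : HasDerivAt (fun t:ℝ => 2*t + 2*t^3/3) (2 + 2*t^2) t := by
      have := ((hasDerivAt_id t).const_mul 2).add (((hasDerivAt_pow 3 t).const_mul 2).div_const 3)
      refine this.congr_deriv ?_
      push_cast
      ring
    have hq : HasDerivAt (fun t:ℝ => 2/5*t^5/(1-t^2))
        ((2/5*(5*t^4)*(1-t^2) - 2/5*t^5*(-(2*t)))/(1-t^2)^2) t := by
      have hnum : HasDerivAt (fun t:ℝ => 2/5*t^5) (2/5*(5*t^4)) t := by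
        have := (hasDerivAt_pow 5 t).const_mul (2/5)
        refine this.congr_deriv ?_
        try norm_num
      have hden : HasDerivAt (fun t:ℝ => 1 - t^2) (-(2*t)) t := by
        have := (hasDerivAt_pow 2 t).const_sub 1
        refine this.congr_deriv ?_
        push_cast
        ring
      exact hnum.div hden (ne_of_gt h0)
    have := (hpoly.add hq).sub (hasDerivAt_logRatio h1 ht.2)
    refine this.congr_deriv ?_
    field_simp
    ring
  have hmono : StrictMonoOn ψ (Set.Ico (0:ℝ) 1) := by
    apply strictMonoOn_of_deriv_pos (convex_Ico 0 1)
    · exact fun t ht => ((hd t ht).continuousAt).continuousWithinAt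
    · rw [interior_Ico]
      intro t ht
      rw [(hd t (Set.mem_Ico.2 ⟨le_of_lt ht.1, ht.2⟩)).deriv]
      have h0 : (0:ℝ) < 1 - t^2 := by nlinarith [ht.1, ht.2]
      have h5 : (0:ℝ) < 5*(1-t^2)^2 := by nlinarith [pow_pos h0 2]
      exact div_pos (by nlinarith [pow_pos ht.1 6]) h5
  have := hmono (Set.mem_Ico.2 ⟨le_refl 0, by norm_num⟩) (Set.mem_Ico.2 ⟨le_of_lt hx.1, hx.2⟩) hx.1
  simp only [hψdef] at this
  norm_num at this
  linarith

lemma forceF_hasDerivAt {x:ℝ} (hx : x ∈ Set.Ioo (0:ℝ) 1) :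
    HasDerivAt forceF (16*Real.pi*(-1/x^2 - Real.log ((1-x)/(1+x))/x^3
      - 1/(x^2*(1-x^2)) + 4*(1+x^2)/(3*(1-x^2)^2))) x := by
  obtain ⟨hx0, hx1⟩ := hx
  have hne : x ≠ 0 := ne_of_gt hx0
  have hsq : (0:ℝ) < 1 - x^2 := by nlinarith
  have h1 : HasDerivAt (fun t:ℝ => 1/t) (-1/x^2) x := by
    have h := hasDerivAt_inv hne
    simp only [one_div]
    refine h.congr_deriv ?_
    field_simp
  have h2a : HasDerivAt (fun t:ℝ => 1/(2*t^2)) (-1/x^3) x := by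
    simp only [one_div]
    have hf : HasDerivAt (fun t:ℝ => 2*t^2) (2*(2*x)) x := by
      have := (hasDerivAt_pow 2 x).const_mul 2
      refine this.congr_deriv ?_
      try norm_num
    have := hf.inv (by positivity)
    refine this.congr_deriv ?_
    field_simp
  have h2 := h2a.mul (hasDerivAt_logRatio' (by linarith) hx1)
  have h3 : HasDerivAt (fun t:ℝ => 4*t/(3*(1-t^2)))
      ((4*(3*(1-x^2)) - 4*x*(3*(-(2*x))))/(3*(1-x^2))^2) x := by
    have hnum : HasDerivAt (fun t:ℝ => 4*t) 4 x := by
      have := (hasDerivAt_id x).const_mul 4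
      refine this.congr_deriv ?_
      norm_num
    have hden : HasDerivAt (fun t:ℝ => 3*(1-t^2)) (3*(-(2*x))) x := by
      have h' : HasDerivAt (fun t:ℝ => 1-t^2) (-(2*x)) x := by
        have := (hasDerivAt_pow 2 x).const_sub 1
        refine this.congr_deriv ?_
        try norm_num
      exact h'.const_mul 3
    exact hnum.div hden (by positivity)
  have := ((h1.add h2).add h3).const_mul (16*Real.pi)
  refine this.congr_deriv ?_
  field_simp
  ring

lemma forceF_deriv_pos {x:ℝ} (hx : x ∈ Set.Ioo (0:ℝ) 1)
    (hlb : 2*x + 2*x^3/3 ≤ Real.log ((1+x)/(1-x))) :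
    0 < 16*Real.pi*(-1/x^2 - Real.log ((1-x)/(1+x))/x^3
      - 1/(x^2*(1-x^2)) + 4*(1+x^2)/(3*(1-x^2)^2)) := by
  obtain ⟨hx0, hx1⟩ := hx
  have hsq : (0:ℝ) < 1 - x^2 := by nlinarith
  have hswap : Real.log ((1-x)/(1+x)) = -Real.log ((1+x)/(1-x)) := by
    rw [← Real.log_inv, inv_div]
  set l := Real.log ((1+x)/(1-x)) with hl
  have hE : -1/x^2 - Real.log ((1-x)/(1+x))/x^3 - 1/(x^2*(1-x^2)) + 4*(1+x^2)/(3*(1-x^2)^2)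
      = (-3*x*(1-x^2)^2 + 3*l*(1-x^2)^2 - 3*x*(1-x^2) + 4*x^3*(1+x^2))/(3*x^3*(1-x^2)^2) := by
    rw [hswap]
    have hxne : x ≠ 0 := ne_of_gt hx0
    have hsne : (1:ℝ) - x^2 ≠ 0 := ne_of_gt hsq
    field_simp
    ring
  rw [hE]
  have hnum : 0 < -3*x*(1-x^2)^2 + 3*l*(1-x^2)^2 - 3*x*(1-x^2) + 4*x^3*(1+x^2) := by
    nlinarith [mul_le_mul_of_nonneg_right hlb (le_of_lt (pow_pos hsq 2)), pow_pos hx0 3,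
      pow_pos hx0 5, pow_pos hx0 7]
  have hden : (0:ℝ) < 3*x^3*(1-x^2)^2 := by positivity
  have hpi := Real.pi_pos
  positivity

lemma forceF_ub {x:ℝ} (hx : x ∈ Set.Ioo (0:ℝ) 1)
    (hlb : 2*x + 2*x^3/3 ≤ Real.log ((1+x)/(1-x))) :
    forceF x ≤ 16*Real.pi*(x*(3+x^2)/(3*(1-x^2))) := by
  obtain ⟨hx0, hx1⟩ := hx
  have hsq : (0:ℝ) < 1 - x^2 := by nlinarith
  have hswap : Real.log ((1-x)/(1+x)) = -Real.log ((1+x)/(1-x)) := by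
    rw [← Real.log_inv, inv_div]
  set l := Real.log ((1+x)/(1-x)) with hl
  have hdiff : x*(3+x^2)/(3*(1-x^2)) - (1/x + (1/(2*x^2))*Real.log ((1-x)/(1+x)) + 4*x/(3*(1-x^2)))
      = (l - (2*x + 2*x^3/3))/(2*x^2) := by
    rw [hswap]
    have hxne : x ≠ 0 := ne_of_gt hx0
    have hsne : (1:ℝ) - x^2 ≠ 0 := ne_of_gt hsq
    field_simp
    ring
  have h2 : 0 ≤ (l - (2*x + 2*x^3/3))/(2*x^2) := by
    apply div_nonneg (by linarith) (by positivity)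
  rw [forceF]
  have hpi := Real.pi_pos
  nlinarith [hdiff, h2]

lemma forceF_lb {x:ℝ} (hx : x ∈ Set.Ioo (0:ℝ) 1)
    (hub : Real.log ((1+x)/(1-x)) ≤ 2*x + 2*x^3/3 + 2/5*x^5/(1-x^2)) :
    16*Real.pi*(x*(15+2*x^2)/(15*(1-x^2))) ≤ forceF x := by
  obtain ⟨hx0, hx1⟩ := hx
  have hsq : (0:ℝ) < 1 - x^2 := by nlinarith
  have hswap : Real.log ((1-x)/(1+x)) = -Real.log ((1+x)/(1-x)) := by
    rw [← Real.log_inv, inv_div]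
  set l := Real.log ((1+x)/(1-x)) with hl
  have hdiff : (1/x + (1/(2*x^2))*Real.log ((1-x)/(1+x)) + 4*x/(3*(1-x^2))) - x*(15+2*x^2)/(15*(1-x^2))
      = ((2*x + 2*x^3/3 + 2/5*x^5/(1-x^2)) - l)/(2*x^2) := by
    rw [hswap]
    have hxne : x ≠ 0 := ne_of_gt hx0
    have hsne : (1:ℝ) - x^2 ≠ 0 := ne_of_gt hsq
    field_simp
    ring
  have h2 : 0 ≤ ((2*x + 2*x^3/3 + 2/5*x^5/(1-x^2)) - l)/(2*x^2) := by
    apply div_nonneg (by linarith) (by positivity)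
  rw [forceF]
  have hpi := Real.pi_pos
  nlinarith [hdiff, h2]

lemma forceF_strictMonoOn : StrictMonoOn forceF (Set.Ioo (0:ℝ) 1) := by
  apply strictMonoOn_of_deriv_pos (convex_Ioo 0 1)
  · exact fun t ht => (forceF_hasDerivAt ht).continuousAt.continuousWithinAt
  · rw [interior_Ioo]
    intro t ht
    rw [(forceF_hasDerivAt ht).deriv]
    exact forceF_deriv_pos ht (log_lb ht)

lemma forceF_pos' {x:ℝ} (hx : x ∈ Set.Ioo (0:ℝ) 1) : 0 < forceF x := by
  have h := forceF_lb hx (log_ub hx)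
  have hsq : (0:ℝ) < 1 - x^2 := by nlinarith [hx.1, hx.2]
  have hpi := Real.pi_pos
  have hx0 := hx.1
  have : (0:ℝ) < 16*Real.pi*(x*(15+2*x^2)/(15*(1-x^2))) := by positivity
  linarith

lemma forceF_tendsto_zero :
    Tendsto forceF (nhdsWithin 0 (Set.Ioi (0:ℝ))) (nhds 0) := by
  have hmem : Set.Ioo (0:ℝ) 1 ∈ nhdsWithin 0 (Set.Ioi (0:ℝ)) :=
    Ioo_mem_nhdsGT_of_mem ⟨le_refl 0, zero_lt_one⟩
  have hlow : Tendsto (fun x:ℝ => 16*Real.pi*(x*(15+2*x^2)/(15*(1-x^2))))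
      (nhdsWithin 0 (Set.Ioi (0:ℝ))) (nhds 0) := by
    have hc : ContinuousAt (fun x:ℝ => 16*Real.pi*(x*(15+2*x^2)/(15*(1-x^2)))) 0 := by
      apply ContinuousAt.mul continuousAt_const
      exact ContinuousAt.div (by fun_prop) (by fun_prop) (by norm_num)
    have := hc.tendsto.mono_left (nhdsWithin_le_nhds (s := Set.Ioi (0:ℝ)))
    convert this using 2
    norm_num
  have hup : Tendsto (fun x:ℝ => 16*Real.pi*(x*(3+x^2)/(3*(1-x^2))))
      (nhdsWithin 0 (Set.Ioi (0:ℝ))) (nhds 0) := by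
    have hc : ContinuousAt (fun x:ℝ => 16*Real.pi*(x*(3+x^2)/(3*(1-x^2)))) 0 := by
      apply ContinuousAt.mul continuousAt_const
      exact ContinuousAt.div (by fun_prop) (by fun_prop) (by norm_num)
    have := hc.tendsto.mono_left (nhdsWithin_le_nhds (s := Set.Ioi (0:ℝ)))
    convert this using 2
    norm_num
  apply tendsto_of_tendsto_of_tendsto_of_le_of_le' hlow hup
  · filter_upwards [hmem] with x hx
    exact forceF_lb hx (log_ub hx)
  · filter_upwards [hmem] with x hx
    exact forceF_ub hx (log_lb hx)

lemma forceF_tendsto_atTop :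
    Tendsto forceF (nhdsWithin 1 (Set.Iio (1:ℝ))) atTop := by
  have hmem : Set.Ioo (0:ℝ) 1 ∈ nhdsWithin 1 (Set.Iio (1:ℝ)) :=
    Ioo_mem_nhdsLT_of_mem ⟨zero_lt_one, le_refl 1⟩
  have hden : Tendsto (fun x:ℝ => 1-x^2) (nhdsWithin 1 (Set.Iio (1:ℝ)))
      (nhdsWithin 0 (Set.Ioi (0:ℝ))) := by
    apply tendsto_nhdsWithin_of_tendsto_nhds_of_eventually_within
    · have hc : ContinuousAt (fun x:ℝ => 1-x^2) 1 := by fun_prop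
      have := hc.tendsto.mono_left (nhdsWithin_le_nhds (s := Set.Iio (1:ℝ)))
      convert this using 2
      norm_num
    · filter_upwards [hmem] with x hx
      have : (0:ℝ) < 1 - x^2 := by nlinarith [hx.1, hx.2]
      exact this
  have hinv : Tendsto (fun x:ℝ => (1-x^2)⁻¹) (nhdsWithin 1 (Set.Iio (1:ℝ))) atTop :=
    hden.inv_tendsto_nhdsGT_zero
  have hconst : Tendsto (fun x:ℝ => 16*Real.pi*(x*(15+2*x^2))/15)
      (nhdsWithin 1 (Set.Iio (1:ℝ))) (nhds (16*Real.pi*17/15)) := by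
    have hc : ContinuousAt (fun x:ℝ => 16*Real.pi*(x*(15+2*x^2))/15) 1 := by fun_prop
    have := hc.tendsto.mono_left (nhdsWithin_le_nhds (s := Set.Iio (1:ℝ)))
    convert this using 2
    try norm_num
  have hC : (0:ℝ) < 16*Real.pi*17/15 := by positivity
  have hmul := hconst.pos_mul_atTop hC hinv
  apply tendsto_atTop_mono' _ _ hmul
  filter_upwards [hmem] with x hx
  have h := forceF_lb hx (log_ub hx)
  have : 16*Real.pi*(x*(15+2*x^2))/15 * (1-x^2)⁻¹ = 16*Real.pi*(x*(15+2*x^2)/(15*(1-x^2))) := by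
    field_simp
    try ring
  rw [this]
  exact h

lemma forceF_image : forceF '' Set.Ioo (0:ℝ) 1 = Set.Ioi (0:ℝ) := by
  apply Set.Subset.antisymm
  · rintro _ ⟨x, hx, rfl⟩
    exact forceF_pos' hx
  · intro y hy
    have hy' : (0:ℝ) < y := hy
    have h1 : ∀ᶠ a in nhdsWithin 0 (Set.Ioi (0:ℝ)), forceF a < y :=
      forceF_tendsto_zero.eventually (Filter.Tendsto.eventually_lt_const hy' tendsto_id)
    have h2 : ∀ᶠ a in nhdsWithin 0 (Set.Ioi (0:ℝ)), a ∈ Set.Ioo (0:ℝ) 1 :=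
      Ioo_mem_nhdsGT_of_mem ⟨le_refl 0, zero_lt_one⟩
    obtain ⟨a, hfa, ha⟩ := (h1.and h2).exists
    have h3 : ∀ᶠ b in nhdsWithin 1 (Set.Iio (1:ℝ)), y < forceF b :=
      forceF_tendsto_atTop.eventually_gt_atTop y
    have h4 : ∀ᶠ b in nhdsWithin 1 (Set.Iio (1:ℝ)), b ∈ Set.Ioo a 1 :=
      Ioo_mem_nhdsLT_of_mem ⟨ha.2, le_refl 1⟩
    obtain ⟨b, hfb, hb⟩ := (h3.and h4).exists
    have hab : a ≤ b := le_of_lt hb.1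
    have hsub : Set.Icc a b ⊆ Set.Ioo (0:ℝ) 1 := fun z hz =>
      ⟨lt_of_lt_of_le ha.1 hz.1, lt_of_le_of_lt hz.2 hb.2⟩
    have hcont : ContinuousOn forceF (Set.Icc a b) := fun z hz =>
      (forceF_hasDerivAt (hsub hz)).continuousAt.continuousWithinAt
    have := intermediate_value_Ioo hab hcont (⟨hfa, hfb⟩ : y ∈ Set.Ioo (forceF a) (forceF b))
    obtain ⟨c, hc, hfc⟩ := this
    exact ⟨c, ⟨lt_trans ha.1 hc.1, lt_trans hc.2 hb.2⟩, hfc⟩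

/-- `f` is strictly increasing on `(0,1)`, positive there, with range exactly `(0,∞)`:
`f(ε) → 0` as `ε → 0⁺`, `f(ε) → ∞` as `ε → 1⁻`, and `f` is a strictly increasing
bijection from `(0,1)` onto `(0,∞)`. -/
theorem forceF_strictMono_bijective :
    StrictMonoOn forceF (Set.Ioo (0 : ℝ) 1) ∧
    (∀ ε ∈ Set.Ioo (0 : ℝ) 1, 0 < forceF ε) ∧
    forceF '' Set.Ioo (0 : ℝ) 1 = Set.Ioi (0 : ℝ) ∧
    Tendsto forceF (nhdsWithin 0 (Set.Ioi (0 : ℝ))) (nhds 0) ∧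
    Tendsto forceF (nhdsWithin 1 (Set.Iio (1 : ℝ))) atTop ∧
    Set.BijOn forceF (Set.Ioo (0 : ℝ) 1) (Set.Ioi (0 : ℝ)) := by
  refine ⟨forceF_strictMonoOn, fun ε hε => forceF_pos' hε, forceF_image,
    forceF_tendsto_zero, forceF_tendsto_atTop, ?_, ?_, ?_⟩
  · intro x hx
    rw [← forceF_image]
    exact Set.mem_image_of_mem _ hx
  · exact forceF_strictMonoOn.injOn
  · exact forceF_image.ge
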